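/- Let S be a finite set of positive integers all of whose prime-power divisors are less than N, and suppose ∑_{n∈S} 1/n ≥ ρ > μ > 0. If N is sufficiently large in terms of ρ and μ, then there is a subset T ⊆ S with ∑_{n∈T} 1/n > μ such that for every prime power q dividing some element of T, ∑_{n∈T, q|n} 1/n > (ρ − μ)/(2q log log N). -/

import Mathlib

open Finset
open scoped Nat

namespace Stmt8Aux

lemma tele (f : ℕ → ℝ) {a b : ℕ} (h : a ≤ b) :
    ∑ n ∈ Ico a b, (f n - f (n + 1)) = f a - f b := by
  induction b, h using Nat.le_induction with
  | base => simp
  | succ b hb ih => rw [Finset.sum_Ico_succ_top (by omega), ih]; ring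

lemma primorial_pos' (n : ℕ) : 0 < primorial n := by
  apply Finset.prod_pos; intro p hp; exact (Finset.mem_filter.1 hp).2.pos

/-- Chebyshev-type bound from the primorial. -/
lemma sum_log_primes_le (n : ℕ) :
    ∑ p ∈ (range (n + 1)).filter Nat.Prime, Real.log p ≤ n * Real.log 4 := by
  have h2 : Real.log (primorial n) ≤ n * Real.log 4 := by
    calc Real.log (primorial n) ≤ Real.log (((4:ℕ):ℝ) ^ n) :=
          Real.log_le_log (by exact_mod_cast (primorial_pos' n)) (by exact_mod_cast primorial_le_4_pow n)
      _ = n * Real.log 4 := by rw [Real.log_pow]; norm_num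
  refine le_trans (le_of_eq ?_) h2
  rw [primorial]
  push_cast
  rw [Real.log_prod]
  intro p hp
  simp only [mem_filter, mem_range] at hp
  exact_mod_cast hp.2.pos.ne'

/-- Legendre-type: `∑_{p ≤ n} ⌊n/p⌋ log p ≤ log n! ≤ n log n`. -/
lemma legendre_sum {n : ℕ} (hn : 1 ≤ n) :
    ∑ p ∈ (range (n + 1)).filter Nat.Prime, ((n / p : ℕ) : ℝ) * Real.log p
      ≤ (n : ℝ) * Real.log n := by
  have hfact : (0:ℝ) < (n ! : ℕ) := by exact_mod_cast n.factorial_pos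
  have key1 : ∑ p ∈ (range (n + 1)).filter Nat.Prime, ((n / p : ℕ) : ℝ) * Real.log p
      ≤ Real.log (n ! : ℕ) := by
    have hlog : Real.log ((n ! : ℕ) : ℝ)
        = ∑ p ∈ (n !).primeFactors, ((n !).factorization p : ℝ) * Real.log p := by
      conv_lhs => rw [← Nat.factorization_prod_pow_eq_self n.factorial_ne_zero]
      rw [Finsupp.prod, ← Nat.support_factorization]
      push_cast
      rw [Real.log_prod]
      · apply Finset.sum_congr rfl
        intro p hp
        rw [Real.log_pow]
      · intro p hp
        have hpp : p.Prime := Nat.prime_of_mem_primeFactors (by rwa [Nat.support_factorization] at hp)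
        exact pow_ne_zero _ (by exact_mod_cast hpp.pos.ne')
    rw [hlog]
    apply le_trans (Finset.sum_le_sum ?_)
      (Finset.sum_le_sum_of_subset_of_nonneg ?_ ?_)
    · intro p hp
      simp only [mem_filter, mem_range] at hp
      obtain ⟨hpn, hp⟩ := hp
      have hple : p ≤ n := by omega
      have : (n / p : ℕ) ≤ (n !).factorization p := by
        haveI : Fact p.Prime := ⟨hp⟩
        rw [Nat.factorization_def _ hp, padicValNat_factorial (Nat.lt_succ_self _)]
        have h1 : 1 ∈ Finset.Ico 1 (Nat.log p n + 1) := by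
          simp only [Finset.mem_Ico]
          exact ⟨le_refl _, by have := Nat.log_pos hp.one_lt hple; omega⟩
        calc n / p = n / p ^ 1 := by rw [pow_one]
          _ ≤ _ := Finset.single_le_sum (f := fun i => n / p ^ i) (fun i _ => Nat.zero_le _) h1
      have hlp : 0 ≤ Real.log p := Real.log_nonneg (by exact_mod_cast hp.one_lt.le)
      exact mul_le_mul_of_nonneg_right (by exact_mod_cast this) hlp
    · intro p hp
      simp only [mem_filter, mem_range] at hp
      exact Nat.mem_primeFactors.2 ⟨hp.2, Nat.dvd_factorial hp.2.pos (by omega), n.factorial_ne_zero⟩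
    · intro p hp _
      have : p.Prime := Nat.prime_of_mem_primeFactors hp
      have hlp : 0 ≤ Real.log p := Real.log_nonneg (by exact_mod_cast this.one_lt.le)
      positivity
  refine key1.trans ?_
  calc Real.log ((n !:ℕ):ℝ) ≤ Real.log (((n:ℝ)) ^ n) := by
        apply Real.log_le_log hfact
        exact_mod_cast Nat.factorial_le_pow n
    _ = (n:ℝ) * Real.log n := Real.log_pow n n

end Stmt8Aux

namespace Stmt8Aux

/-- Mertens-type: `∑_{p ≤ n} log p / p ≤ log n + log 4`. -/
lemma mertens1 {n : ℕ} (hn : 1 ≤ n) :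
    ∑ p ∈ (range (n + 1)).filter Nat.Prime, Real.log p / p ≤ Real.log n + Real.log 4 := by
  have hn0 : (0:ℝ) < n := by exact_mod_cast hn
  rw [← mul_le_mul_iff_right₀ hn0, mul_add, Finset.mul_sum]
  have step : ∀ p ∈ (range (n + 1)).filter Nat.Prime,
      (n:ℝ) * (Real.log p / p) ≤ ((n / p : ℕ) : ℝ) * Real.log p + Real.log p := by
    intro p hp
    simp only [mem_filter, mem_range] at hp
    have hp2 : (0:ℝ) < p := by exact_mod_cast hp.2.pos
    have hlp : 0 ≤ Real.log p := Real.log_nonneg (by exact_mod_cast hp.2.one_lt.le)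
    have hdiv : (n:ℝ) / p ≤ ((n / p : ℕ) : ℝ) + 1 := by
      rw [div_le_iff₀ hp2]
      have h3 : n < (n / p + 1) * p := by
        have h := Nat.div_add_mod n p
        have h2 := Nat.mod_lt n hp.2.pos
        nlinarith [Nat.div_mul_le_self n p]
      exact_mod_cast h3.le
    calc (n:ℝ) * (Real.log p / p) = ((n:ℝ) / p) * Real.log p := by ring
      _ ≤ (((n / p : ℕ) : ℝ) + 1) * Real.log p := mul_le_mul_of_nonneg_right hdiv hlp
      _ = ((n / p : ℕ) : ℝ) * Real.log p + Real.log p := by ring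
  calc ∑ p ∈ (range (n + 1)).filter Nat.Prime, (n:ℝ) * (Real.log p / p)
      ≤ ∑ p ∈ (range (n + 1)).filter Nat.Prime,
          (((n / p : ℕ) : ℝ) * Real.log p + Real.log p) := Finset.sum_le_sum step
    _ = (∑ p ∈ (range (n + 1)).filter Nat.Prime, ((n / p : ℕ) : ℝ) * Real.log p)
        + ∑ p ∈ (range (n + 1)).filter Nat.Prime, Real.log p := Finset.sum_add_distrib
    _ ≤ (n:ℝ) * Real.log n + (n:ℝ) * Real.log 4 :=
        add_le_add (legendre_sum hn) (sum_log_primes_le n)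

end Stmt8Aux

namespace Stmt8Aux

lemma log_two_pos : (0:ℝ) < Real.log 2 := Real.log_pos (by norm_num)

lemma log_three_gt_one : (1:ℝ) < Real.log 3 := by
  rw [Real.lt_log_iff_exp_lt (by norm_num)]
  calc Real.exp 1 < 2.7182818286 := Real.exp_one_lt_d9
    _ < 3 := by norm_num

lemma log_four_eq : Real.log 4 = 2 * Real.log 2 := by
  rw [show (4:ℝ) = 2 ^ 2 by norm_num, Real.log_pow]; push_cast; ring

/-- Mertens' second theorem, upper bound. -/
lemma mertens2 {N : ℕ} (hN : 4 ≤ N) :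
    ∑ p ∈ (range N).filter Nat.Prime, (1:ℝ)/p ≤ Real.log (Real.log N) + 6 := by
  set M := N - 1 with hM
  have hM3 : 3 ≤ M := by omega
  set A : Finset ℕ := (Icc 3 M).filter Nat.Prime with hA
  set f : ℕ → ℝ := fun k => 1 / Real.log k with hf
  set g : ℕ → ℝ := fun p => Real.log p / p with hg
  set LL : ℕ → ℝ := fun k => Real.log (Real.log k) with hLL
  have hlogM : (1:ℝ) < Real.log M := by
    calc (1:ℝ) < Real.log 3 := log_three_gt_one
      _ ≤ Real.log M := Real.log_le_log (by norm_num) (by exact_mod_cast hM3)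
  have hlogM0 : (0:ℝ) < Real.log M := by linarith
  -- split off p = 2
  have hsplit : (range N).filter Nat.Prime = insert 2 A := by
    ext p
    simp only [mem_filter, mem_range, mem_insert, hA, mem_Icc]
    constructor
    · rintro ⟨hpN, hp⟩
      by_cases h2 : p = 2
      · exact Or.inl h2
      · have := hp.two_le
        exact Or.inr ⟨⟨by omega, by omega⟩, hp⟩
    · rintro (rfl | ⟨⟨h3, hMle⟩, hp⟩)
      · exact ⟨by omega, Nat.prime_two⟩
      · exact ⟨by omega, hp⟩
  have h2A : 2 ∉ A := by simp [hA]
  rw [hsplit, Finset.sum_insert h2A]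
  -- log p positive on A
  have hApos : ∀ p ∈ A, (1:ℝ) < Real.log p ∧ (0:ℝ) < p := by
    intro p hp
    simp only [hA, mem_filter, mem_Icc] at hp
    constructor
    · calc (1:ℝ) < Real.log 3 := log_three_gt_one
        _ ≤ Real.log p := Real.log_le_log (by norm_num) (by exact_mod_cast hp.1.1)
    · exact_mod_cast hp.2.pos
  -- the pointwise identity
  have hid : ∀ p ∈ A, (1:ℝ)/p = g p * (1 / Real.log M) + ∑ n ∈ Ico p M, g p * (f n - f (n+1)) := by
    intro p hp
    have hpM : p ≤ M := by simp only [hA, mem_filter, mem_Icc] at hp; exact hp.1.2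
    rw [← Finset.mul_sum, tele f hpM]
    obtain ⟨hlp, hp0⟩ := hApos p hp
    have hlp0 : Real.log p ≠ 0 := by linarith
    simp only [hg, hf]
    field_simp
    ring
  rw [Finset.sum_congr rfl hid, Finset.sum_add_distrib]
  -- first piece
  have hSA : ∑ p ∈ A, g p ≤ Real.log M + Real.log 4 := by
    refine le_trans (Finset.sum_le_sum_of_subset_of_nonneg ?_ ?_) (mertens1 (by omega))
    · intro p hp
      simp only [hA, mem_filter, mem_Icc, mem_range] at hp ⊢
      exact ⟨by omega, hp.2⟩
    · intro p hp _
      simp only [mem_filter, mem_range] at hp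
      have : (0:ℝ) ≤ Real.log p := Real.log_nonneg (by exact_mod_cast hp.2.one_lt.le)
      have : (0:ℝ) ≤ (p:ℝ) := by positivity
      simp only [hg]
      positivity
  have hgnonneg : ∀ p ∈ A, 0 ≤ g p := by
    intro p hp
    obtain ⟨hlp, hp0⟩ := hApos p hp
    simp only [hg]; positivity
  have piece1 : ∑ p ∈ A, g p * (1 / Real.log M) ≤ 1 + Real.log 4 / Real.log 2 := by
    rw [← Finset.sum_mul]
    calc (∑ p ∈ A, g p) * (1 / Real.log M)
        ≤ (Real.log M + Real.log 4) * (1 / Real.log M) := by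
          apply mul_le_mul_of_nonneg_right hSA; positivity
      _ = 1 + Real.log 4 / Real.log M := by field_simp
      _ ≤ 1 + Real.log 4 / Real.log 2 := by
          have h4 : (0:ℝ) ≤ Real.log 4 := Real.log_nonneg (by norm_num)
          have : Real.log 2 ≤ Real.log M := by
            apply Real.log_le_log (by norm_num); exact_mod_cast by omega
          gcongr
  -- swap the double sum
  have hswap : ∑ p ∈ A, ∑ n ∈ Ico p M, g p * (f n - f (n+1))
      = ∑ n ∈ Ico 3 M, ∑ p ∈ A.filter (· ≤ n), g p * (f n - f (n+1)) := by
    rw [Finset.sum_sigma', Finset.sum_sigma']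
    refine Finset.sum_nbij' (fun x => ⟨x.2, x.1⟩) (fun x => ⟨x.2, x.1⟩) ?_ ?_ ?_ ?_ ?_
    · rintro ⟨p, n⟩ hx
      simp only [mem_sigma, hA, mem_filter, mem_Icc, mem_Ico] at hx ⊢
      obtain ⟨⟨⟨h3, hMle⟩, hp⟩, hn1, hn2⟩ := hx
      exact ⟨⟨by omega, hn2⟩, ⟨⟨h3, hMle⟩, hp⟩, hn1⟩
    · rintro ⟨n, p⟩ hx
      simp only [mem_sigma, hA, mem_filter, mem_Icc, mem_Ico] at hx ⊢
      obtain ⟨⟨h3, hMlt⟩, ⟨⟨hp3, hpM⟩, hp⟩, hpn⟩ := hx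
      exact ⟨⟨⟨hp3, hpM⟩, hp⟩, hpn, hMlt⟩
    · intros; rfl
    · intros; rfl
    · intros; rfl
  rw [hswap]
  -- bound the inner sums
  have inner_bound : ∀ n ∈ Ico 3 M,
      ∑ p ∈ A.filter (· ≤ n), g p * (f n - f (n+1))
        ≤ (LL (n+1) - LL n) + Real.log 4 * (f n - f (n+1)) := by
    intro n hn
    simp only [mem_Ico] at hn
    have hln : (1:ℝ) < Real.log n := by
      calc (1:ℝ) < Real.log 3 := log_three_gt_one
        _ ≤ Real.log n := Real.log_le_log (by norm_num) (by exact_mod_cast hn.1)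
    have hln1 : (1:ℝ) < Real.log (n+1:ℕ) := by
      calc (1:ℝ) < Real.log n := hln
        _ ≤ Real.log (n+1:ℕ) := Real.log_le_log (by exact_mod_cast (by omega : 0 < n)) (by exact_mod_cast Nat.le_succ n)
    have hcnn : 0 ≤ f n - f (n+1) := by
      simp only [hf]
      rw [sub_nonneg]
      apply one_div_le_one_div_of_le (by linarith)
      exact Real.log_le_log (by exact_mod_cast (by omega : 0 < n)) (by exact_mod_cast Nat.le_succ n)
    have hsum : ∑ p ∈ A.filter (· ≤ n), g p ≤ Real.log n + Real.log 4 := by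
      refine le_trans (Finset.sum_le_sum_of_subset_of_nonneg ?_ ?_) (mertens1 (by omega))
      · intro p hp
        simp only [hA, mem_filter, mem_Icc, mem_range] at hp ⊢
        exact ⟨by omega, hp.1.2⟩
      · intro p hp _
        simp only [mem_filter, mem_range] at hp
        have h1 : (0:ℝ) ≤ Real.log p := Real.log_nonneg (by exact_mod_cast hp.2.one_lt.le)
        have h2 : (0:ℝ) ≤ (p:ℝ) := by positivity
        simp only [hg]; positivity
    have key : Real.log n * (f n - f (n+1)) ≤ LL (n+1) - LL n := by
      set x := Real.log n
      set y := Real.log (n+1:ℕ)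
      have hx : (0:ℝ) < x := by linarith
      have hy : (0:ℝ) < y := by linarith
      have hxy : x ≤ y :=
        Real.log_le_log (by exact_mod_cast (by omega : 0 < n)) (by exact_mod_cast Nat.le_succ n)
      have hlog : Real.log (x / y) ≤ x / y - 1 := Real.log_le_sub_one_of_pos (by positivity)
      have hLLd : LL (n+1) - LL n = -(Real.log (x/y)) := by
        show Real.log y - Real.log x = -(Real.log (x/y))
        rw [Real.log_div (by linarith) (by linarith)]
        ring
      have hlhs : x * (f n - f (n+1)) = 1 - x / y := by
        show x * (1/x - 1/y) = 1 - x / y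
        field_simp
      rw [hLLd, hlhs]
      linarith
    calc ∑ p ∈ A.filter (· ≤ n), g p * (f n - f (n+1))
        = (∑ p ∈ A.filter (· ≤ n), g p) * (f n - f (n+1)) := by rw [Finset.sum_mul]
      _ ≤ (Real.log n + Real.log 4) * (f n - f (n+1)) := by
          apply mul_le_mul_of_nonneg_right hsum hcnn
      _ = Real.log n * (f n - f (n+1)) + Real.log 4 * (f n - f (n+1)) := by ring
      _ ≤ (LL (n+1) - LL n) + Real.log 4 * (f n - f (n+1)) := by linarith [key]
  have piece2 : ∑ n ∈ Ico 3 M, ∑ p ∈ A.filter (· ≤ n), g p * (f n - f (n+1))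
      ≤ LL M + Real.log 4 / Real.log 2 := by
    calc ∑ n ∈ Ico 3 M, ∑ p ∈ A.filter (· ≤ n), g p * (f n - f (n+1))
        ≤ ∑ n ∈ Ico 3 M, ((LL (n+1) - LL n) + Real.log 4 * (f n - f (n+1))) :=
          Finset.sum_le_sum inner_bound
      _ = (LL M - LL 3) + Real.log 4 * (f 3 - f M) := by
          rw [Finset.sum_add_distrib, ← Finset.mul_sum, tele f hM3]
          have : ∑ n ∈ Ico 3 M, (LL (n+1) - LL n) = -(∑ n ∈ Ico 3 M, (LL n - LL (n+1))) := by
            rw [← Finset.sum_neg_distrib]; apply Finset.sum_congr rfl; intros; ring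
          rw [this, tele LL hM3]; ring
      _ ≤ LL M + Real.log 4 / Real.log 2 := by
          have hLL3 : 0 ≤ LL 3 := by
            simp only [hLL]
            apply Real.log_nonneg
            push_cast
            linarith [log_three_gt_one]
          have h4 : (0:ℝ) ≤ Real.log 4 := Real.log_nonneg (by norm_num)
          have hfM : 0 ≤ f M := by simp only [hf]; positivity
          have hf3 : f 3 ≤ 1 / Real.log 2 := by
            simp only [hf]
            apply one_div_le_one_div_of_le log_two_pos
            apply Real.log_le_log (by norm_num); norm_num
          have : Real.log 4 * (f 3 - f M) ≤ Real.log 4 * (1 / Real.log 2) := by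
            apply mul_le_mul_of_nonneg_left (by linarith) h4
          have heq : Real.log 4 * (1 / Real.log 2) = Real.log 4 / Real.log 2 := by ring
          linarith
  -- put everything together
  have hLLmono : LL M ≤ LL N := by
    simp only [hLL]
    apply Real.log_le_log (by linarith)
    exact Real.log_le_log (by exact_mod_cast (by omega : 0 < M)) (by exact_mod_cast (by omega : M ≤ N))
  have h42 : Real.log 4 / Real.log 2 = 2 := by
    rw [log_four_eq]; field_simp
  have : (1:ℝ)/2 ≤ 1 := by norm_num
  linarith [piece1, piece2]

end Stmt8Aux

namespace Stmt8Aux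

/-- Sum of reciprocals of proper prime powers is at most 1. -/
lemma ppow_extra (N : ℕ) :
    ∑ q ∈ (range N).filter (fun q => IsPrimePow q ∧ ¬ q.Prime), (1:ℝ)/q ≤ 1 := by
  rcases Nat.eq_zero_or_pos N with rfl | hN0
  · simp
  set B := (range N).filter (fun q => IsPrimePow q ∧ ¬ q.Prime) with hB
  set g : ℕ → ℕ × ℕ := fun q => (q.minFac, q.factorization q.minFac) with hg
  -- structure of elements of B
  have hstruct : ∀ q ∈ B, q.minFac.Prime ∧ 2 ≤ q.factorization q.minFac ∧
      q.minFac ^ (q.factorization q.minFac) = q ∧ q < N := by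
    intro q hq
    simp only [hB, mem_filter, mem_range] at hq
    obtain ⟨hqN, hpp, hnp⟩ := hq
    obtain ⟨p, k, hp, hk, hpk⟩ := hpp
    have hp' : p.Prime := hp.nat_prime
    have hmin : q.minFac = p := by
      rw [← hpk]
      exact Nat.Prime.pow_minFac hp' (by omega)
    have hfac : q.factorization q.minFac = k := by
      rw [hmin, ← hpk, hp'.factorization_pow, Finsupp.single_eq_same]
    refine ⟨hmin ▸ hp', ?_, ?_, hqN⟩
    · rw [hfac]
      by_contra hlt
      push_neg at hlt
      have hk1 : k = 1 := by omega
      apply hnp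
      rw [← hpk, hk1, pow_one]
      exact hp'
    · rw [hfac, hmin, hpk]
  -- rewrite as a sum over the image
  have hinj : Set.InjOn g B := by
    intro q hq q' hq' heq
    obtain ⟨_, _, hq3, _⟩ := hstruct q hq
    obtain ⟨_, _, hq3', _⟩ := hstruct q' hq'
    have h1 : q.minFac = q'.minFac := congrArg Prod.fst heq
    have h2 : q.factorization q.minFac = q'.factorization q'.minFac := congrArg Prod.snd heq
    rw [← hq3, ← hq3', h2, h1]
  have him : ∑ q ∈ B, (1:ℝ)/q = ∑ x ∈ B.image g, (1:ℝ)/((x.1:ℝ)^x.2) := by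
    rw [Finset.sum_image (fun q hq q' hq' h => hinj hq hq' h)]
    apply Finset.sum_congr rfl
    intro q hq
    obtain ⟨_, _, hq3, _⟩ := hstruct q hq
    simp only [hg]
    conv_lhs => rw [← hq3]
    push_cast
    ring
  rw [him]
  -- compare with the full product sum
  have hsub : B.image g ⊆ (Icc 2 N) ×ˢ (Icc 2 N) := by
    intro x hx
    obtain ⟨q, hq, rfl⟩ := Finset.mem_image.1 hx
    obtain ⟨h1, h2, h3, h4⟩ := hstruct q hq
    simp only [Finset.mem_product, mem_Icc]
    have hq2 : 2 ≤ q.minFac := h1.two_le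
    have hk2 : 2 ≤ q.factorization q.minFac := h2
    have hqN' : q ≤ N := by omega
    have hle1 : q.minFac ≤ q := by
      calc q.minFac ≤ q.minFac ^ (q.factorization q.minFac) :=
            Nat.le_self_pow (by omega : q.factorization q.minFac ≠ 0) _
        _ = q := h3
    have h2le : 2 ^ (q.factorization q.minFac) ≤ q := by
      calc 2 ^ (q.factorization q.minFac) ≤ q.minFac ^ (q.factorization q.minFac) :=
            Nat.pow_le_pow_left hq2 _
        _ = q := h3
    have hklt : q.factorization q.minFac < 2 ^ (q.factorization q.minFac) :=
      Nat.lt_two_pow_self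
    simp only [hg]
    exact ⟨⟨hq2, by omega⟩, hk2, by omega⟩
  have hle : ∑ x ∈ B.image g, (1:ℝ)/((x.1:ℝ)^x.2)
      ≤ ∑ x ∈ (Icc 2 N) ×ˢ (Icc 2 N), (1:ℝ)/((x.1:ℝ)^x.2) := by
    apply Finset.sum_le_sum_of_subset_of_nonneg hsub
    intro x hx _
    apply div_nonneg zero_le_one
    positivity
  refine hle.trans ?_
  rw [Finset.sum_product]
  -- inner geometric sums
  have inner : ∀ m ∈ Icc 2 N, ∑ j ∈ Icc 2 N, (1:ℝ)/((m:ℝ)^j)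
      ≤ 1/((m:ℝ)-1) - 1/(m:ℝ) := by
    intro m hm
    simp only [mem_Icc] at hm
    have hm1 : (1:ℝ) < (m:ℝ) := by exact_mod_cast hm.1
    set r : ℝ := 1/(m:ℝ) with hr
    have hr0 : 0 < r := by positivity
    have hr1 : r < 1 := by rw [hr, div_lt_one (by linarith)]; linarith
    have hform : ∀ j, (1:ℝ)/((m:ℝ)^j) = r ^ j := by
      intro j; rw [hr, div_pow, one_pow]
    rw [Finset.sum_congr rfl (fun j _ => hform j)]
    have : Icc 2 N = Ico 2 (N+1) := by rw [Finset.Ico_add_one_right_eq_Icc]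
    rw [this, Finset.sum_Ico_eq_sum_range]
    have hsum2 : ∑ i ∈ range (N + 1 - 2), r ^ (2 + i) = r^2 * ∑ i ∈ range (N + 1 - 2), r ^ i := by
      rw [Finset.mul_sum]; apply Finset.sum_congr rfl; intro i _; rw [pow_add]
    rw [hsum2]
    have hgeom : ∑ i ∈ range (N + 1 - 2), r ^ i ≤ 1/(1 - r) := by
      rw [geom_sum_eq (by linarith)]
      have h1r : (0:ℝ) < 1 - r := by linarith
      have heq : (r ^ (N+1-2) - 1) / (r - 1) = (1 - r ^ (N+1-2)) / (1 - r) := by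
        rw [← neg_div_neg_eq]; ring_nf
      rw [heq]
      have hpw : (0:ℝ) ≤ r ^ (N+1-2) := by positivity
      gcongr
      linarith
    calc r^2 * ∑ i ∈ range (N + 1 - 2), r ^ i ≤ r^2 * (1/(1-r)) := by
          apply mul_le_mul_of_nonneg_left hgeom (by positivity)
      _ = 1/((m:ℝ)-1) - 1/(m:ℝ) := by
          have hm0 : (m:ℝ) ≠ 0 := by linarith
          have hmm : (m:ℝ) - 1 ≠ 0 := by linarith
          rw [hr]
          field_simp
          ring
  calc ∑ m ∈ Icc 2 N, ∑ j ∈ Icc 2 N, (1:ℝ)/((m:ℝ)^j)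
      ≤ ∑ m ∈ Icc 2 N, (1/((m:ℝ)-1) - 1/(m:ℝ)) := Finset.sum_le_sum inner
    _ ≤ 1 := by
      have : Icc 2 N = Ico 2 (N+1) := by rw [Finset.Ico_add_one_right_eq_Icc]
      rw [this]
      have htel := tele (a := 2) (b := N+1) (fun m => 1/((m:ℝ)-1)) (by omega)
      have congr1 : ∑ m ∈ Ico 2 (N+1), (1/((m:ℝ)-1) - 1/(m:ℝ))
          = ∑ m ∈ Ico 2 (N+1), ((fun m : ℕ => 1/((m:ℝ)-1)) m - (fun m : ℕ => 1/((m:ℝ)-1)) (m+1)) := by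
        apply Finset.sum_congr rfl
        intro m hm
        simp only [mem_Ico] at hm
        push_cast
        ring_nf
      rw [congr1, htel]
      have hN1 : (0:ℝ) ≤ 1/(((N+1:ℕ):ℝ)-1) := by
        apply div_nonneg zero_le_one
        push_cast; linarith [Nat.cast_nonneg (α := ℝ) N]
      show (1:ℝ)/(((2:ℕ):ℝ)-1) - 1/(((N+1:ℕ):ℝ)-1) ≤ 1
      have h21 : (1:ℝ)/(((2:ℕ):ℝ)-1) = 1 := by norm_num
      rw [h21]
      linarith [hN1]

end Stmt8Aux

namespace Stmt8Aux

/-- Combine: sum over prime powers below `N`. -/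
lemma ppow_sum {N : ℕ} (hN : 4 ≤ N) (hLL : 8 ≤ Real.log (Real.log N)) :
    ∑ q ∈ (range N).filter IsPrimePow, (1:ℝ)/q < 2 * Real.log (Real.log N) := by
  have hsplit := Finset.sum_filter_add_sum_filter_not ((range N).filter IsPrimePow)
    Nat.Prime (fun q => (1:ℝ)/q)
  have h1 : ((range N).filter IsPrimePow).filter Nat.Prime = (range N).filter Nat.Prime := by
    rw [Finset.filter_filter]
    apply Finset.filter_congr
    intro q _
    simp only [and_iff_right_iff_imp]
    exact fun hp => hp.isPrimePow
  have h2 : ((range N).filter IsPrimePow).filter (fun q => ¬ Nat.Prime q)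
      = (range N).filter (fun q => IsPrimePow q ∧ ¬ q.Prime) := by
    rw [Finset.filter_filter]
  rw [h1, h2] at hsplit
  have hm2 := mertens2 hN
  have hpe := ppow_extra N
  linarith

/-- The iterative extraction process. -/
lemma extract (θ : ℕ → ℝ) (hθ : ∀ q, 0 ≤ θ q) (Q : Finset ℕ) :
    ∀ S : Finset ℕ, (∀ q : ℕ, IsPrimePow q → (∃ n ∈ S, q ∣ n) → q ∈ Q) →
    ∃ T, T ⊆ S ∧ ((∑ n ∈ S, (1:ℝ)/n) - ∑ q ∈ Q, θ q ≤ ∑ n ∈ T, (1:ℝ)/n) ∧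
      ∀ q : ℕ, IsPrimePow q → (∃ n ∈ T, q ∣ n) →
        θ q < ∑ n ∈ T.filter (q ∣ ·), (1:ℝ)/n := by
  induction Q using Finset.strongInduction with
  | _ Q ih =>
    intro S hS
    by_cases hgood : ∀ q : ℕ, IsPrimePow q → (∃ n ∈ S, q ∣ n) →
        θ q < ∑ n ∈ S.filter (q ∣ ·), (1:ℝ)/n
    · refine ⟨S, Finset.Subset.refl S, ?_, hgood⟩
      have : 0 ≤ ∑ q ∈ Q, θ q := Finset.sum_nonneg fun q _ => hθ q
      linarith
    · push_neg at hgood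
      obtain ⟨q₀, hq₀pp, hq₀wit, hq₀bad⟩ := hgood
      have hq₀Q : q₀ ∈ Q := hS q₀ hq₀pp hq₀wit
      have hinv : ∀ q : ℕ, IsPrimePow q →
          (∃ n ∈ S.filter (fun n => ¬ q₀ ∣ n), q ∣ n) → q ∈ Q.erase q₀ := by
        intro q hq hwit
        obtain ⟨n, hn, hdvd⟩ := hwit
        simp only [Finset.mem_filter] at hn
        refine Finset.mem_erase.2 ⟨?_, hS q hq ⟨n, hn.1, hdvd⟩⟩
        rintro rfl
        exact hn.2 hdvd
      obtain ⟨T, hTS', h1, h2⟩ := ih (Q.erase q₀) (Finset.erase_ssubset hq₀Q)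
        (S.filter (fun n => ¬ q₀ ∣ n)) hinv
      refine ⟨T, hTS'.trans (Finset.filter_subset _ _), ?_, h2⟩
      have hsplit := Finset.sum_filter_add_sum_filter_not S
        (fun n => q₀ ∣ n) (fun n => (1:ℝ)/n)
      have herase : θ q₀ + ∑ q ∈ Q.erase q₀, θ q = ∑ q ∈ Q, θ q :=
        Finset.add_sum_erase Q θ hq₀Q
      have hbad : ∑ n ∈ S.filter (fun n => q₀ ∣ n), (1:ℝ)/n ≤ θ q₀ := hq₀bad
      linarith

end Stmt8Aux

open Stmt8Aux

/-- If `S` is a finite set of positive integers whose prime-power divisors are all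
`< N`, and `∑_{n∈S} 1/n ≥ ρ > μ > 0`, then for `N` large in terms of `ρ, μ` there is
`T ⊆ S` with `∑_{n∈T} 1/n > μ` and, for every prime power `q` dividing an element of
`T`, `∑_{n∈T, q∣n} 1/n > (ρ-μ)/(2q log log N)`. -/
theorem stmt_8 (ρ μ : ℝ) (hμ : 0 < μ) (hρμ : μ < ρ) :
    ∃ N₀ : ℕ, ∀ N : ℕ, N₀ ≤ N → ∀ S : Finset ℕ,
      (∀ n ∈ S, 0 < n) →
      (∀ q : ℕ, IsPrimePow q → (∃ n ∈ S, q ∣ n) → q < N) →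
      ρ ≤ (∑ n ∈ S, (1 : ℝ) / n) →
      ∃ T ⊆ S, μ < (∑ n ∈ T, (1 : ℝ) / n) ∧
        ∀ q : ℕ, IsPrimePow q → (∃ n ∈ T, q ∣ n) →
          (ρ - μ) / (2 * q * Real.log (Real.log N)) <
            ∑ n ∈ T.filter (q ∣ ·), (1 : ℝ) / n := by
  refine ⟨⌈Real.exp (Real.exp 9)⌉₊ + 4, fun N hN S hSpos hSq hρS => ?_⟩
  have hN4 : 4 ≤ N := by omega
  have hNR : Real.exp (Real.exp 9) ≤ (N : ℝ) := by
    calc Real.exp (Real.exp 9) ≤ (⌈Real.exp (Real.exp 9)⌉₊ : ℝ) := Nat.le_ceil _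
      _ ≤ (N : ℝ) := by exact_mod_cast by omega
  have hLL8 : 8 ≤ Real.log (Real.log N) := by
    have h1 : Real.exp 9 ≤ Real.log N := by
      calc Real.exp 9 = Real.log (Real.exp (Real.exp 9)) := (Real.log_exp _).symm
        _ ≤ Real.log N := Real.log_le_log (Real.exp_pos _) hNR
    calc (8:ℝ) ≤ 9 := by norm_num
      _ = Real.log (Real.exp 9) := (Real.log_exp _).symm
      _ ≤ Real.log (Real.log N) := Real.log_le_log (Real.exp_pos _) h1
  set L := Real.log (Real.log N) with hLdef
  have hL0 : (0:ℝ) < L := by linarith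
  set θ : ℕ → ℝ := fun q => (ρ - μ) / (2 * (q:ℝ) * L) with hθdef
  have hθ : ∀ q, 0 ≤ θ q := by
    intro q
    apply div_nonneg (by linarith)
    have : (0:ℝ) ≤ (q:ℝ) := Nat.cast_nonneg q
    nlinarith
  obtain ⟨T, hTS, hT1, hT2⟩ := extract θ hθ ((range N).filter IsPrimePow) S
    (fun q hq hwit => Finset.mem_filter.2 ⟨Finset.mem_range.2 (hSq q hq hwit), hq⟩)
  refine ⟨T, hTS, ?_, hT2⟩
  have hform : ∀ q : ℕ, θ q = (ρ - μ) / (2 * L) * (1 / (q:ℝ)) := by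
    intro q
    show (ρ - μ) / (2 * (q:ℝ) * L) = (ρ - μ) / (2 * L) * (1 / (q:ℝ))
    rw [div_mul_div_comm, mul_one]
    ring_nf
  have hsum : ∑ q ∈ (range N).filter IsPrimePow, θ q < ρ - μ := by
    rw [Finset.sum_congr rfl (fun q _ => hform q), ← Finset.mul_sum]
    have hppow := ppow_sum hN4 hLL8
    have hc : 0 < (ρ - μ) / (2 * L) := div_pos (by linarith) (by linarith)
    calc (ρ - μ) / (2 * L) * ∑ q ∈ (range N).filter IsPrimePow, 1 / (q:ℝ)
        < (ρ - μ) / (2 * L) * (2 * L) := by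
          apply mul_lt_mul_of_pos_left hppow hc
      _ = ρ - μ := by field_simp
  linarith
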